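/- arXiv:2110.05579 — 3 statements merged into one kernel-verified Lean document; each statement's English description precedes it below -/
import Mathlib

section
/- Let T ≥ 1, let α be a real number with |α| ≤ 1, let G(α) = (I_T − αW)⁻¹W where W is the T×T shift matrix, and let Σ be a real T×T matrix. Then |tr(G(α)·Σ)| ≤ Σ_{t=1}^{T} Σ_{τ≠t} |Σ_{t,τ}|, the sum of absolute values of the off-diagonal entries of Σ. -/
open Matrix Finset

/-- The `T×T` real shift matrix `W`, with ones directly above the main diagonal and zeros
elsewhere. -/
noncomputable def shiftMatrix (T : ℕ) : Matrix (Fin T) (Fin T) ℝ :=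
  Matrix.of fun t s => if (s : ℕ) = (t : ℕ) + 1 then 1 else 0

lemma sum_shift_left (T : ℕ) (t : Fin T) (f : Fin T → ℝ) :
    ∑ j, shiftMatrix T t j * f j =
      if h : (t : ℕ) + 1 < T then f ⟨t + 1, h⟩ else 0 := by
  split_ifs with h
  · rw [Finset.sum_eq_single ⟨(t:ℕ)+1, h⟩]
    · simp [shiftMatrix]
    · intro j _ hj
      simp only [shiftMatrix, Matrix.of_apply]
      rw [if_neg, zero_mul]
      intro hc; exact hj (Fin.ext hc)
    · simp
  · apply Finset.sum_eq_zero
    intro j _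
    simp only [shiftMatrix, Matrix.of_apply]
    rw [if_neg, zero_mul]
    intro hc; exact h (hc ▸ j.isLt)

lemma sum_shift_right (T : ℕ) (s : Fin T) (f : Fin T → ℝ) :
    ∑ j, f j * shiftMatrix T j s =
      if h : 1 ≤ (s : ℕ) then f ⟨(s : ℕ) - 1, by omega⟩ else 0 := by
  split_ifs with h
  · rw [Finset.sum_eq_single ⟨(s:ℕ)-1, by omega⟩]
    · simp only [shiftMatrix, Matrix.of_apply]
      rw [if_pos (by omega), mul_one]
    · intro j _ hj
      simp only [shiftMatrix, Matrix.of_apply]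
      rw [if_neg, mul_zero]
      intro hc; exact hj (Fin.ext (show (j:ℕ) = (s:ℕ)-1 by omega))
    · simp
  · apply Finset.sum_eq_zero
    intro j _
    simp only [shiftMatrix, Matrix.of_apply]
    rw [if_neg, mul_zero]
    omega

/-- The explicit inverse of `1 - α • W`: entries `α^(s-t)` for `t ≤ s`, zero below diagonal. -/
noncomputable def resolvMat (T : ℕ) (α : ℝ) : Matrix (Fin T) (Fin T) ℝ :=
  Matrix.of fun t s => if (t : ℕ) ≤ (s : ℕ) then α ^ ((s : ℕ) - t) else 0

lemma right_inv_resolv (T : ℕ) (α : ℝ) :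
    (1 - α • shiftMatrix T) * resolvMat T α = 1 := by
  ext t s
  rw [Matrix.mul_apply]
  simp only [Matrix.sub_apply, Matrix.smul_apply, Matrix.one_apply, sub_mul, smul_eq_mul,
    mul_assoc]
  rw [Finset.sum_sub_distrib, ← Finset.mul_sum, sum_shift_left]
  have h1 : ∑ j, (if t = j then (1:ℝ) else 0) * resolvMat T α j s = resolvMat T α t s := by
    simp
  rw [h1]
  simp only [resolvMat, Matrix.of_apply]
  by_cases h : (t : ℕ) + 1 < T
  · rw [dif_pos h]
    split_ifs with h2 h3 h4 h3 h4 <;> try omega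
    · have : (s:ℕ) - t = ((s:ℕ) - (t+1)) + 1 := by omega
      rw [this, pow_succ']
      ring
    · subst h3; simp
    · simp
  · rw [dif_neg h, mul_zero, sub_zero]
    have hs : (s:ℕ) ≤ t := by omega
    split_ifs with h2 h3 h3
    · have : (s:ℕ) - t = 0 := by omega
      simp [this]
    · omega
    · omega
    · rfl

lemma G_apply (T : ℕ) (α : ℝ) (t s : Fin T) :
    (resolvMat T α * shiftMatrix T) t s =
      if (t : ℕ) < (s : ℕ) then α ^ ((s : ℕ) - t - 1) else 0 := by
  rw [Matrix.mul_apply, sum_shift_right]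
  by_cases h : 1 ≤ (s : ℕ)
  · rw [dif_pos h]
    simp only [resolvMat, Matrix.of_apply]
    split_ifs with h1 h2 h2 <;> try omega
    · congr 1; omega
    · rfl
  · rw [dif_neg h, if_neg (by omega)]

lemma swap_erase {T : ℕ} (f : Fin T → Fin T → ℝ) :
    ∑ t : Fin T, ∑ j ∈ Finset.univ.erase t, f t j =
      ∑ t : Fin T, ∑ j ∈ Finset.univ.erase t, f j t := by
  simp only [Finset.sum_erase_eq_sub (Finset.mem_univ _)]
  rw [Finset.sum_sub_distrib, Finset.sum_sub_distrib, Finset.sum_comm]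

/-- For `|α| ≤ 1` and any real `T×T` matrix `S`, `|tr (G(α) S)|` is bounded by the sum of
the absolute values of the off-diagonal entries of `S`, where `G(α) = (I - α W)⁻¹ W`. -/
theorem abs_trace_G_mul_le_offdiag (T : ℕ) (hT : 1 ≤ T) (α : ℝ) (hα : |α| ≤ 1)
    (S : Matrix (Fin T) (Fin T) ℝ) :
    |Matrix.trace ((1 - α • shiftMatrix T)⁻¹ * shiftMatrix T * S)| ≤
      ∑ t : Fin T, ∑ τ ∈ Finset.univ.erase t, |S t τ| := by
  rw [Matrix.inv_eq_right_inv (right_inv_resolv T α)]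
  set G := resolvMat T α * shiftMatrix T with hG
  have htr : Matrix.trace (G * S) = ∑ t, ∑ j, G t j * S j t := by
    simp only [Matrix.trace, Matrix.diag, Matrix.mul_apply]
  rw [htr]
  have hGle : ∀ t j : Fin T, |G t j| ≤ 1 := by
    intro t j
    rw [hG, G_apply]
    split_ifs
    · rw [abs_pow]; exact pow_le_one₀ (abs_nonneg _) hα
    · simp
  have hGdiag : ∀ t : Fin T, G t t = 0 := by
    intro t; rw [hG, G_apply, if_neg (lt_irrefl _)]
  calc |∑ t, ∑ j, G t j * S j t| ≤ ∑ t, |∑ j, G t j * S j t| :=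
        Finset.abs_sum_le_sum_abs _ _
    _ ≤ ∑ t : Fin T, ∑ j ∈ Finset.univ.erase t, |S j t| := by
        apply Finset.sum_le_sum
        intro t _
        rw [← Finset.sum_erase_add _ _ (Finset.mem_univ t), hGdiag, zero_mul, add_zero]
        refine le_trans (Finset.abs_sum_le_sum_abs _ _) (Finset.sum_le_sum fun j _ => ?_)
        rw [abs_mul]
        calc |G t j| * |S j t| ≤ 1 * |S j t| :=
              mul_le_mul_of_nonneg_right (hGle t j) (abs_nonneg _)
          _ = |S j t| := one_mul _
    _ = ∑ t : Fin T, ∑ τ ∈ Finset.univ.erase t, |S t τ| := swap_erase _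
end

section
/- Let T ≥ 1, let α be real with α ≠ 1, let G(α) = (I_T − αW)⁻¹W where W is the T×T shift matrix, and let ι_T denote the T×1 vector of ones. Then tr(G(α)·ι_T ι_Tᵀ) = Σ_{t=1}^{T−1} Σ_{τ=1}^{t} α^{τ−1}, and hence, with P_{ι} := (1/T)·ι_T ι_Tᵀ the orthogonal projection onto the span of ι_T, tr(G(α)·P_{ι}) = (1/(1−α)) · (1 − (1/T)·(1−α^T)/(1−α)). -/
open Matrix Finset

/-- The `T×T` all-ones matrix `ι_T ι_Tᵀ`. -/
noncomputable def onesMatrix (T : ℕ) : Matrix (Fin T) (Fin T) ℝ :=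
  Matrix.of fun _ _ => (1 : ℝ)

lemma sum_indicator_fin (T n : ℕ) :
    (∑ j : Fin T, if (j : ℕ) = n then (1 : ℝ) else 0) = if n < T then 1 else 0 := by
  by_cases h : n < T
  · rw [if_pos h, Finset.sum_eq_single (⟨n, h⟩ : Fin T)]
    · simp
    · intro j _ hj
      rw [if_neg]
      intro hc
      exact hj (Fin.ext hc)
    · simp
  · rw [if_neg h]
    apply Finset.sum_eq_zero
    intro j _
    rw [if_neg]
    have := j.isLt
    omega

lemma shift_pow (T k : ℕ) :
    shiftMatrix T ^ k = Matrix.of (fun t s : Fin T => if (s : ℕ) = (t : ℕ) + k then 1 else 0) := by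
  induction k with
  | zero =>
    ext t s
    simp only [pow_zero, Matrix.one_apply, Matrix.of_apply, Nat.add_zero]
    by_cases h : t = s
    · simp [h]
    · rw [if_neg h, if_neg]
      intro hc
      exact h (Fin.ext hc.symm)
  | succ k ih =>
    ext t s
    rw [pow_succ, Matrix.mul_apply]
    simp only [ih]
    simp only [shiftMatrix, Matrix.of_apply]
    by_cases h : (t : ℕ) + k < T
    · rw [Finset.sum_eq_single (⟨(t : ℕ) + k, h⟩ : Fin T)]
      · simp [← Nat.add_assoc]
      · intro j _ hj
        apply mul_eq_zero_of_left
        rw [if_neg]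
        intro hc
        exact hj (Fin.ext hc)
      · simp
    · rw [Finset.sum_eq_zero, if_neg]
      · have := s.isLt; omega
      · intro j _
        apply mul_eq_zero_of_left
        rw [if_neg]
        have := j.isLt
        omega

lemma shift_pow_nilpotent (T : ℕ) : shiftMatrix T ^ T = 0 := by
  ext t s
  rw [shift_pow]
  simp only [Matrix.of_apply, Matrix.zero_apply]
  rw [if_neg]
  have := s.isLt
  have := t.isLt
  omega

lemma trace_shift_pow_mul_ones (T m : ℕ) :
    Matrix.trace (shiftMatrix T ^ m * onesMatrix T) = ((T - m : ℕ) : ℝ) := by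
  rw [Matrix.trace]
  simp only [Matrix.diag, Matrix.mul_apply, onesMatrix, shift_pow, Matrix.of_apply, mul_one]
  simp only [sum_indicator_fin]
  rw [Fin.sum_univ_eq_sum_range (fun i => if i + m < T then (1 : ℝ) else 0)]
  rw [Finset.sum_boole]
  have hfil : (Finset.range T).filter (fun i => i + m < T) = Finset.range (T - m) := by
    ext i
    simp only [Finset.mem_filter, Finset.mem_range]
    omega
  rw [hfil]
  simp

lemma inv_one_sub_smul_shift (T : ℕ) (α : ℝ) :
    (1 - α • shiftMatrix T)⁻¹ = ∑ k ∈ Finset.range T, (α • shiftMatrix T) ^ k := by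
  apply Matrix.inv_eq_right_inv
  have hx : (α • shiftMatrix T) ^ T = 0 := by
    rw [smul_pow, shift_pow_nilpotent, smul_zero]
  have h := mul_geom_sum (α • shiftMatrix T) T
  have : (1 - α • shiftMatrix T) * ∑ k ∈ Finset.range T, (α • shiftMatrix T) ^ k
      = -((α • shiftMatrix T - 1) * ∑ k ∈ Finset.range T, (α • shiftMatrix T) ^ k) := by
    rw [← neg_mul, neg_sub]
  rw [this, h, hx]
  simp

lemma sum_sum_geom (α : ℝ) (n : ℕ) :
    ∑ t ∈ Finset.range n, ∑ τ ∈ Finset.range (t + 1), α ^ τ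
      = ∑ τ ∈ Finset.range n, ((n - τ : ℕ) : ℝ) * α ^ τ := by
  induction n with
  | zero => simp
  | succ n ih =>
    rw [Finset.sum_range_succ, ih, Finset.sum_range_succ]
    have h : ∑ τ ∈ Finset.range n, ((n + 1 - τ : ℕ) : ℝ) * α ^ τ
        = ∑ τ ∈ Finset.range n, (((n - τ : ℕ) : ℝ) * α ^ τ + α ^ τ) := by
      apply Finset.sum_congr rfl
      intro τ hτ
      have hτn : τ ≤ n := Nat.le_of_lt (Finset.mem_range.mp hτ)
      have : (n + 1 - τ : ℕ) = (n - τ) + 1 := by omega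
      rw [this]
      push_cast
      ring
    conv_rhs => rw [Finset.sum_range_succ]
    rw [h, Finset.sum_add_distrib]
    simp
    ring

/-- With `G(α) = (I - α W)⁻¹ W` and `ι_T` the vector of ones:
`tr (G(α) ι_T ι_Tᵀ) = ∑_{t=1}^{T-1} ∑_{τ=1}^{t} α^(τ-1)`, and hence with
`P_ι = (1/T) ι_T ι_Tᵀ`,
`tr (G(α) P_ι) = (1/(1-α)) (1 - (1/T)(1-α^T)/(1-α))` (Nickell bias formula). -/
theorem trace_G_mul_ones (T : ℕ) (hT : 1 ≤ T) (α : ℝ) (hα : α ≠ 1) :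
    (Matrix.trace ((1 - α • shiftMatrix T)⁻¹ * shiftMatrix T * onesMatrix T) =
      ∑ t ∈ Finset.range (T - 1), ∑ τ ∈ Finset.range (t + 1), α ^ τ) ∧
    (Matrix.trace ((1 - α • shiftMatrix T)⁻¹ * shiftMatrix T *
        ((1 / (T : ℝ)) • onesMatrix T)) =
      (1 / (1 - α)) * (1 - (1 / (T : ℝ)) * ((1 - α ^ T) / (1 - α)))) := by
  obtain ⟨n, rfl⟩ : ∃ n, T = n + 1 := ⟨T - 1, (Nat.succ_pred_eq_of_pos hT).symm⟩
  have h1 : Matrix.trace ((1 - α • shiftMatrix (n + 1))⁻¹ * shiftMatrix (n + 1)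
      * onesMatrix (n + 1))
      = ∑ t ∈ Finset.range n, ∑ τ ∈ Finset.range (t + 1), α ^ τ := by
    rw [inv_one_sub_smul_shift, Finset.sum_mul, Finset.sum_mul, Matrix.trace_sum]
    have hterm : ∀ k, Matrix.trace ((α • shiftMatrix (n + 1)) ^ k * shiftMatrix (n + 1)
        * onesMatrix (n + 1)) = α ^ k * ((n - k : ℕ) : ℝ) := by
      intro k
      rw [smul_pow, Matrix.smul_mul, Matrix.smul_mul, Matrix.trace_smul, ← pow_succ,
        trace_shift_pow_mul_ones]
      have : (n + 1 - (k + 1) : ℕ) = n - k := by omega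
      rw [this]
      simp
    rw [Finset.sum_congr rfl (fun k _ => hterm k), sum_sum_geom]
    rw [Finset.sum_range_succ]
    simp [mul_comm]
  constructor
  · simpa using h1
  · rw [Matrix.mul_smul, Matrix.trace_smul, smul_eq_mul, h1]
    have hα' : α - 1 ≠ 0 := sub_ne_zero.mpr hα
    have hα'' : (1 : ℝ) - α ≠ 0 := sub_ne_zero.mpr (Ne.symm hα)
    have hn : ((n : ℝ) + 1) ≠ 0 := by positivity
    have hsum : ∑ t ∈ Finset.range n, ∑ τ ∈ Finset.range (t + 1), α ^ τ
        = (α * ((α ^ n - 1) / (α - 1)) - n) / (α - 1) := by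
      have h2 : ∀ t, ∑ τ ∈ Finset.range (t + 1), α ^ τ = (α ^ (t + 1) - 1) / (α - 1) :=
        fun t => geom_sum_eq hα (t + 1)
      rw [Finset.sum_congr rfl (fun t _ => h2 t), ← Finset.sum_div]
      congr 1
      rw [Finset.sum_sub_distrib, Finset.sum_const, Finset.card_range]
      congr 1
      · rw [← geom_sum_eq hα n, Finset.mul_sum]
        apply Finset.sum_congr rfl
        intro t _
        rw [pow_succ, mul_comm]
      · simp
    rw [hsum]
    push_cast
    field_simp
    ring
end

section
/- Let T ≥ 1, R ≥ 1, let α be real with 0 ≤ α < 1, let G(α) = (I_T − αW)⁻¹W where W is the T×T shift matrix, and let F be a real T×R matrix with FᵀF invertible, with P_F := F(FᵀF)⁻¹Fᵀ. Then |tr(G(α)·P_F)| ≤ R·(1 − α^T)/(1 − α). -/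
open Matrix

lemma shiftMatrix_apply (T : ℕ) (t s : Fin T) :
    shiftMatrix T t s = if (s : ℕ) = (t : ℕ) + 1 then 1 else 0 := rfl

lemma shiftMatrix_pow_apply (T k : ℕ) (t s : Fin T) :
    ((shiftMatrix T) ^ k) t s = if (s : ℕ) = (t : ℕ) + k then 1 else 0 := by
  induction k generalizing t s with
  | zero => simp [Matrix.one_apply, Fin.ext_iff, eq_comm]
  | succ k ih =>
    rw [pow_succ, Matrix.mul_apply]
    simp only [ih, shiftMatrix_apply]
    rcases lt_or_ge ((t : ℕ) + k) T with h | h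
    · have h1 : ∀ u : Fin T,
          (if (u : ℕ) = (t : ℕ) + k then (1:ℝ) else 0) *
            (if (s : ℕ) = (u : ℕ) + 1 then 1 else 0) =
          if u = ⟨(t : ℕ) + k, h⟩ then (if (s : ℕ) = (u : ℕ) + 1 then (1:ℝ) else 0) else 0 := by
        intro u
        by_cases hu : (u : ℕ) = (t : ℕ) + k
        · simp [hu, Fin.ext_iff]
        · simp [hu, Fin.ext_iff]
      rw [Finset.sum_congr rfl (fun u _ => h1 u), Finset.sum_ite_eq']
      simp [add_assoc]
    · have h1 : ∀ u : Fin T,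
          (if (u : ℕ) = (t : ℕ) + k then (1:ℝ) else 0) *
            (if (s : ℕ) = (u : ℕ) + 1 then 1 else 0) = 0 := by
        intro u
        have : (u : ℕ) ≠ (t : ℕ) + k := by have := u.isLt; omega
        simp [this]
      rw [Finset.sum_congr rfl (fun u _ => h1 u), Finset.sum_const_zero]
      have : (s : ℕ) ≠ (t : ℕ) + (k + 1) := by have := s.isLt; omega
      simp [this]

lemma shiftMatrix_pow_self (T : ℕ) : (shiftMatrix T) ^ T = 0 := by
  ext t s
  rw [shiftMatrix_pow_apply]
  have : (s : ℕ) ≠ (t : ℕ) + T := by have := s.isLt; omega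
  simp [this]

/-- For `0 ≤ α < 1`, `G(α) = (I - α W)⁻¹ W`, and `F` a real `T×R` matrix with `FᵀF`
invertible and `P_F = F (FᵀF)⁻¹ Fᵀ`: `|tr (G(α) P_F)| ≤ R (1 - α^T)/(1 - α)`. -/
theorem abs_trace_G_mul_proj_le (T R : ℕ) (hT : 1 ≤ T) (hR : 1 ≤ R)
    (α : ℝ) (hα0 : 0 ≤ α) (hα1 : α < 1)
    (F : Matrix (Fin T) (Fin R) ℝ) (hF : IsUnit (Fᵀ * F)) :
    |Matrix.trace ((1 - α • shiftMatrix T)⁻¹ * shiftMatrix T *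
        (F * (Fᵀ * F)⁻¹ * Fᵀ))| ≤
      (R : ℝ) * ((1 - α ^ T) / (1 - α)) := by
  set W := shiftMatrix T with hW
  set M := (Fᵀ * F)⁻¹ with hM
  set P := F * M * Fᵀ with hP
  have hdet : IsUnit (Fᵀ * F).det := (Matrix.isUnit_iff_isUnit_det _).mp hF
  have hinv : M * (Fᵀ * F) = 1 := Matrix.nonsing_inv_mul _ hdet
  -- P is symmetric
  have hFFT : (Fᵀ * F)ᵀ = Fᵀ * F := by
    rw [Matrix.transpose_mul, Matrix.transpose_transpose]
  have hMT : Mᵀ = M := by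
    rw [hM, Matrix.transpose_nonsing_inv, hFFT]
  have hPT : Pᵀ = P := by
    rw [hP, Matrix.transpose_mul, Matrix.transpose_mul, hMT, Matrix.transpose_transpose,
      Matrix.mul_assoc]
  -- P is idempotent
  have hPP : P * P = P := by
    have h1 : P * P = F * ((M * (Fᵀ * F)) * (M * Fᵀ)) := by
      simp only [hP, Matrix.mul_assoc]
    rw [h1, hinv, Matrix.one_mul, hP, Matrix.mul_assoc]
  -- entries of P as inner products of columns
  have hrep : ∀ s t : Fin T, P s t = ∑ u : Fin T, P u s * P u t := by
    intro s t
    have h1 : P = Pᵀ * P := by rw [hPT, hPP]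
    conv_lhs => rw [h1]
    rw [Matrix.mul_apply]
    simp [Matrix.transpose_apply]
  have hdiag : ∀ t : Fin T, 0 ≤ P t t := by
    intro t
    rw [hrep t t]
    exact Finset.sum_nonneg fun u _ => mul_self_nonneg _
  have hentry : ∀ s t : Fin T, |P s t| ≤ (P s s + P t t) / 2 := by
    intro s t
    rw [hrep s t, hrep s s, hrep t t]
    calc |∑ u : Fin T, P u s * P u t| ≤ ∑ u : Fin T, |P u s * P u t| :=
          Finset.abs_sum_le_sum_abs _ _
      _ ≤ ∑ u : Fin T, (P u s * P u s + P u t * P u t) / 2 := by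
          apply Finset.sum_le_sum
          intro u _
          rw [abs_mul]
          nlinarith [sq_nonneg (|P u s| - |P u t|), sq_abs (P u s), sq_abs (P u t),
            abs_nonneg (P u s), abs_nonneg (P u t)]
      _ = (∑ u : Fin T, P u s * P u s + ∑ u : Fin T, P u t * P u t) / 2 := by
          rw [← Finset.sum_add_distrib, Finset.sum_div]
  -- trace of P
  have htrP : Matrix.trace P = (R : ℝ) := by
    rw [hP, Matrix.trace_mul_comm, ← Matrix.mul_assoc, Matrix.trace_mul_comm (Fᵀ * F) M,
      hinv, Matrix.trace_one]
    simp
  have htrdiag : (∑ t : Fin T, P t t) = (R : ℝ) := by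
    rw [← htrP]; rfl
  -- key bound: for every m, |trace (W^m * P)| ≤ R
  have hkey : ∀ m : ℕ, |Matrix.trace (W ^ m * P)| ≤ (R : ℝ) := by
    intro m
    have htr : Matrix.trace (W ^ m * P) =
        ∑ t : Fin T, ∑ s : Fin T, (if (s : ℕ) = (t : ℕ) + m then (1:ℝ) else 0) * P s t := by
      rw [Matrix.trace]
      apply Finset.sum_congr rfl
      intro t _
      rw [Matrix.diag_apply, Matrix.mul_apply]
      apply Finset.sum_congr rfl
      intro s _
      rw [hW, shiftMatrix_pow_apply]
    have hcol : ∀ s : Fin T, (∑ t : Fin T, if (s : ℕ) = (t : ℕ) + m then (1:ℝ) else 0) ≤ 1 := by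
      intro s
      rw [Finset.sum_boole]
      have h2 : (Finset.univ.filter fun t : Fin T => (s : ℕ) = (t : ℕ) + m).card ≤ 1 := by
        apply Finset.card_le_one.mpr
        intro a ha b hb
        simp only [Finset.mem_filter] at ha hb
        exact Fin.ext (by omega)
      exact_mod_cast h2
    have hrow : ∀ t : Fin T, (∑ s : Fin T, if (s : ℕ) = (t : ℕ) + m then (1:ℝ) else 0) ≤ 1 := by
      intro t
      rw [Finset.sum_boole]
      have h2 : (Finset.univ.filter fun s : Fin T => (s : ℕ) = (t : ℕ) + m).card ≤ 1 := by
        apply Finset.card_le_one.mpr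
        intro a ha b hb
        simp only [Finset.mem_filter] at ha hb
        exact Fin.ext (by omega)
      exact_mod_cast h2
    have hA : (∑ t : Fin T, ∑ s : Fin T,
        (if (s : ℕ) = (t : ℕ) + m then (1:ℝ) else 0) * P s s) ≤ (R : ℝ) := by
      rw [Finset.sum_comm]
      calc (∑ s : Fin T, ∑ t : Fin T, (if (s : ℕ) = (t : ℕ) + m then (1:ℝ) else 0) * P s s)
          ≤ ∑ s : Fin T, P s s := by
            apply Finset.sum_le_sum
            intro s _
            rw [← Finset.sum_mul]
            calc (∑ t : Fin T, if (s : ℕ) = (t : ℕ) + m then (1:ℝ) else 0) * P s s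
                ≤ 1 * P s s := mul_le_mul_of_nonneg_right (hcol s) (hdiag s)
              _ = P s s := one_mul _
        _ = (R : ℝ) := htrdiag
    have hB : (∑ t : Fin T, ∑ s : Fin T,
        (if (s : ℕ) = (t : ℕ) + m then (1:ℝ) else 0) * P t t) ≤ (R : ℝ) := by
      calc (∑ t : Fin T, ∑ s : Fin T, (if (s : ℕ) = (t : ℕ) + m then (1:ℝ) else 0) * P t t)
          ≤ ∑ t : Fin T, P t t := by
            apply Finset.sum_le_sum
            intro t _
            rw [← Finset.sum_mul]
            calc (∑ s : Fin T, if (s : ℕ) = (t : ℕ) + m then (1:ℝ) else 0) * P t t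
                ≤ 1 * P t t := mul_le_mul_of_nonneg_right (hrow t) (hdiag t)
              _ = P t t := one_mul _
        _ = (R : ℝ) := htrdiag
    rw [htr]
    calc |∑ t : Fin T, ∑ s : Fin T, (if (s : ℕ) = (t : ℕ) + m then (1:ℝ) else 0) * P s t|
        ≤ ∑ t : Fin T, ∑ s : Fin T,
            (if (s : ℕ) = (t : ℕ) + m then (1:ℝ) else 0) * ((P s s + P t t) / 2) := by
          refine (Finset.abs_sum_le_sum_abs _ _).trans (Finset.sum_le_sum fun t _ => ?_)
          refine (Finset.abs_sum_le_sum_abs _ _).trans (Finset.sum_le_sum fun s _ => ?_)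
          rw [abs_mul]
          by_cases h : (s : ℕ) = (t : ℕ) + m
          · simp only [if_pos h, abs_one, one_mul]
            exact hentry s t
          · simp [h]
      _ = (∑ t : Fin T, ∑ s : Fin T, (if (s : ℕ) = (t : ℕ) + m then (1:ℝ) else 0) * P s s
            + ∑ t : Fin T, ∑ s : Fin T,
              (if (s : ℕ) = (t : ℕ) + m then (1:ℝ) else 0) * P t t) / 2 := by
          rw [← Finset.sum_add_distrib, Finset.sum_div]
          apply Finset.sum_congr rfl
          intro t _
          rw [← Finset.sum_add_distrib, Finset.sum_div]
          apply Finset.sum_congr rfl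
          intro s _
          ring
      _ ≤ ((R : ℝ) + (R : ℝ)) / 2 := by linarith
      _ = (R : ℝ) := by ring
  -- expand the inverse as a geometric series
  have hnil : (α • W) ^ T = 0 := by
    rw [smul_pow, hW, shiftMatrix_pow_self, smul_zero]
  have hSinv : (1 - α • W)⁻¹ = ∑ k ∈ Finset.range T, (α • W) ^ k := by
    apply Matrix.inv_eq_right_inv
    rw [mul_neg_geom_sum, hnil, sub_zero]
  have hexp : (1 - α • W)⁻¹ * W * P = ∑ k ∈ Finset.range T, α ^ k • (W ^ (k + 1) * P) := by
    rw [hSinv, Finset.sum_mul, Finset.sum_mul]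
    apply Finset.sum_congr rfl
    intro k _
    rw [smul_pow, Matrix.smul_mul, Matrix.smul_mul, ← pow_succ]
  have htrG : Matrix.trace ((1 - α • W)⁻¹ * W * P) =
      ∑ k ∈ Finset.range T, α ^ k * Matrix.trace (W ^ (k + 1) * P) := by
    rw [hexp, Matrix.trace_sum]
    apply Finset.sum_congr rfl
    intro k _
    rw [Matrix.trace_smul, smul_eq_mul]
  rw [htrG]
  have hgeom : (∑ k ∈ Finset.range T, α ^ k) = (1 - α ^ T) / (1 - α) := by
    rw [geom_sum_eq (by linarith : α ≠ 1)]
    have h1 : α - 1 ≠ 0 := by linarith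
    have h2 : (1 : ℝ) - α ≠ 0 := by linarith
    field_simp
    ring
  calc |∑ k ∈ Finset.range T, α ^ k * Matrix.trace (W ^ (k + 1) * P)|
      ≤ ∑ k ∈ Finset.range T, |α ^ k * Matrix.trace (W ^ (k + 1) * P)| :=
        Finset.abs_sum_le_sum_abs _ _
    _ ≤ ∑ k ∈ Finset.range T, α ^ k * (R : ℝ) := by
        apply Finset.sum_le_sum
        intro k _
        rw [abs_mul, abs_of_nonneg (pow_nonneg hα0 k)]
        exact mul_le_mul_of_nonneg_left (hkey (k + 1)) (pow_nonneg hα0 k)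
    _ = (∑ k ∈ Finset.range T, α ^ k) * (R : ℝ) := (Finset.sum_mul _ _ _).symm
    _ = (R : ℝ) * ((1 - α ^ T) / (1 - α)) := by rw [hgeom, mul_comm]
end
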